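/- arXiv:2006.01350 — 5 statements merged into one kernel-verified Lean document; each statement's English description precedes it below -/
import Mathlib

section
/- Let (μ_i)_{i≥1} be a nonincreasing sequence of positive reals with μ_i ≤ C i^(−2α) for constants C > 0 and α > m + 1/2 where m is a nonnegative integer, and let λ ∈ (0,1]. Then the series ∑_{i=1}^∞ (μ_i/(λ+μ_i)) · i^(2m) converges and is bounded above by a constant (depending only on C, α, m) times λ^(−(2m+1)/(2α)). -/
open Real

lemma step_ineq {s : ℝ} (hs : 1 < s) {a : ℝ} (ha : 1 ≤ a) :
    (a + 1) ^ (-s) ≤ (a ^ (1 - s) - (a + 1) ^ (1 - s)) / (s - 1) := by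
  have h0 : (0:ℝ) < a := lt_of_lt_of_le one_pos ha
  have h1 : (0:ℝ) < a + 1 := by linarith
  have hmem : (0:ℝ) ∉ Set.uIcc a (a+1) := by
    rw [Set.uIcc_of_le (by linarith)]
    intro h
    exact absurd h.1 (by linarith)
  have hint : ∫ x in a..(a+1), x ^ (-s) = ((a+1) ^ (-s+1) - a ^ (-s+1)) / (-s+1) :=
    integral_rpow (Or.inr ⟨by intro h; rw [neg_eq_iff_eq_neg] at h; linarith, hmem⟩)
  have hii : IntervalIntegrable (fun x : ℝ => x ^ (-s)) MeasureTheory.volume a (a+1) :=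
    intervalIntegral.intervalIntegrable_rpow (Or.inr hmem)
  have hconst : IntervalIntegrable (fun _ : ℝ => (a+1) ^ (-s)) MeasureTheory.volume a (a+1) :=
    intervalIntegrable_const
  have hmono : ∀ x ∈ Set.Icc a (a+1), (fun _ : ℝ => (a+1) ^ (-s)) x ≤ (fun x : ℝ => x ^ (-s)) x := by
    intro x hx
    exact rpow_le_rpow_of_nonpos (by linarith [hx.1]) hx.2 (by linarith)
  have hle : (a+1) ^ (-s) ≤ ∫ x in a..(a+1), x ^ (-s) := by
    have := intervalIntegral.integral_mono_on (by linarith : a ≤ a + 1) hconst hii hmono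
    rwa [intervalIntegral.integral_const, add_sub_cancel_left, one_smul] at this
  rw [hint] at hle
  have : ((a+1) ^ (-s+1) - a ^ (-s+1)) / (-s+1) = (a ^ (1-s) - (a+1) ^ (1-s)) / (s-1) := by
    rw [show (-s+1 : ℝ) = 1 - s by ring]
    rw [div_eq_div_iff (by linarith) (by linarith)]
    ring
  rw [this] at hle
  exact hle

lemma tail_tsum_le {s : ℝ} (hs : 1 < s) {N : ℕ} (hN : 1 ≤ N) :
    ∑' i : ℕ, ((N : ℝ) + 1 + i) ^ (-s) ≤ (N : ℝ) ^ (1 - s) / (s - 1) := by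
  have hN1 : (1:ℝ) ≤ (N:ℝ) := by exact_mod_cast hN
  have hnn : ∀ i : ℕ, (0:ℝ) ≤ ((N : ℝ) + 1 + i) ^ (-s) := by
    intro i
    apply rpow_nonneg
    positivity
  apply tsum_le_of_sum_range_le hnn
  intro n
  set F : ℕ → ℝ := fun i => ((N:ℝ) + i) ^ (1-s) with hF
  have hstep : ∀ i ∈ Finset.range n, ((N : ℝ) + 1 + i) ^ (-s) ≤ (F i - F (i+1)) / (s-1) := by
    intro i _
    have h := step_ineq hs (a := (N:ℝ) + i) (le_add_of_le_of_nonneg hN1 (by positivity))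
    have e1 : (N : ℝ) + 1 + i = (N:ℝ) + i + 1 := by ring
    have e2 : F (i+1) = ((N:ℝ) + i + 1) ^ (1-s) := by
      simp only [hF]
      push_cast
      ring_nf
    rw [e1, e2, hF]
    exact h
  have htele : ∑ i ∈ Finset.range n, (F i - F (i+1)) = F 0 - F n :=
    Finset.sum_range_sub' F n
  calc ∑ i ∈ Finset.range n, ((N : ℝ) + 1 + i) ^ (-s)
      ≤ ∑ i ∈ Finset.range n, (F i - F (i+1)) / (s-1) := Finset.sum_le_sum hstep
    _ = (F 0 - F n) / (s-1) := by rw [← Finset.sum_div, htele]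
    _ ≤ (N : ℝ) ^ (1 - s) / (s - 1) := by
        rw [div_le_div_iff_of_pos_right (by linarith : (0:ℝ) < s - 1)]
        have h0 : F 0 = (N:ℝ) ^ (1-s) := by simp [hF]
        have h1 : (0:ℝ) ≤ F n := rpow_nonneg (by positivity) _
        linarith
/-- Upper bound on the high-order effective dimension
`∑ (μ_i/(λ+μ_i)) i^{2m} ≲ λ^{-(2m+1)/(2α)}` for polynomially decaying eigenvalues. -/
theorem stmt2 (C α : ℝ) (m : ℕ) (hC : 0 < C) (hα : (m : ℝ) + 1 / 2 < α) :
    ∃ C' > 0, ∀ (μ : ℕ → ℝ) (lam : ℝ),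
      (∀ i : ℕ, 1 ≤ i → 0 < μ i) →
      (∀ i j : ℕ, 1 ≤ i → i ≤ j → μ j ≤ μ i) →
      (∀ i : ℕ, 1 ≤ i → μ i ≤ C * (i : ℝ) ^ (-(2 * α))) →
      0 < lam → lam ≤ 1 →
      Summable (fun i : ℕ => μ (i + 1) / (lam + μ (i + 1)) * ((i : ℝ) + 1) ^ (2 * m)) ∧
      (∑' i : ℕ, μ (i + 1) / (lam + μ (i + 1)) * ((i : ℝ) + 1) ^ (2 * m)) ≤
        C' * lam ^ (-(2 * (m : ℝ) + 1) / (2 * α)) := by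
  have hm0 : (0:ℝ) ≤ (m:ℝ) := Nat.cast_nonneg m
  have hα0 : 0 < α := by linarith
  set q : ℝ := (2*(m:ℝ)+1)/(2*α) with hq
  set s : ℝ := 2*α - 2*(m:ℝ) with hsdef
  have hs : 1 < s := by rw [hsdef]; linarith
  set c0 : ℝ := C ^ ((1:ℝ)/(2*α)) with hc0
  have hc0pos : 0 < c0 := rpow_pos_of_pos hC _
  have hexp : 2*(m:ℝ) - 2*α = -s := by rw [hsdef]; ring
  refine ⟨C ^ q * ((1 + c0⁻¹)^(2*m+1) + 1/(s-1)), ?_, ?_⟩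
  · exact mul_pos (rpow_pos_of_pos hC q)
      (add_pos (pow_pos (by positivity) _) (div_pos one_pos (by linarith)))
  intro μ lam hpos hmono hdecay hlam hlam1
  have hCl : 0 < C / lam := div_pos hC hlam
  set T : ℝ := (C/lam) ^ ((1:ℝ)/(2*α)) with hT
  have hTpos : 0 < T := rpow_pos_of_pos hCl _
  set N : ℕ := ⌈T⌉₊ with hNdef
  have hN1 : 1 ≤ N := Nat.ceil_pos.mpr hTpos
  have hTN : T ≤ N := Nat.le_ceil T
  have hNT : (N:ℝ) ≤ T + 1 := (Nat.ceil_lt_add_one hTpos.le).le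
  have hc0T : c0 ≤ T := by
    apply rpow_le_rpow hC.le ?_ (by positivity)
    rw [le_div_iff₀ hlam]; nlinarith
  set f : ℕ → ℝ := fun i => μ (i+1) / (lam + μ (i+1)) * ((i:ℝ)+1)^(2*m) with hf
  have hμpos : ∀ i : ℕ, 0 < μ (i+1) := fun i => hpos (i+1) (by omega)
  have hdenpos : ∀ i : ℕ, 0 < lam + μ (i+1) := fun i => by linarith [hμpos i]
  have hfnn : ∀ i, 0 ≤ f i := fun i =>
    mul_nonneg (div_nonneg (hμpos i).le (hdenpos i).le) (by positivity)
  have hf1 : ∀ i, f i ≤ ((i:ℝ)+1)^(2*m) := by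
    intro i
    apply mul_le_of_le_one_left (by positivity)
    rw [div_le_one (hdenpos i)]
    linarith [hμpos i]
  have hf2 : ∀ i, f i ≤ (C/lam) * ((i:ℝ)+1) ^ (2*(m:ℝ) - 2*α) := by
    intro i
    have hx : (0:ℝ) < (i:ℝ)+1 := by positivity
    have hd : μ (i+1) ≤ C * ((i:ℝ)+1) ^ (-(2*α)) := by
      have := hdecay (i+1) (by omega)
      rwa [Nat.cast_add, Nat.cast_one] at this
    have hr : μ (i+1) / (lam + μ (i+1)) ≤ (C * ((i:ℝ)+1) ^ (-(2*α))) / lam :=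
      le_trans (div_le_div_of_nonneg_left (hμpos i).le hlam (by linarith [hμpos i]))
        (by gcongr)
    calc f i ≤ (C * ((i:ℝ)+1)^(-(2*α)) / lam) * ((i:ℝ)+1)^(2*m) :=
          mul_le_mul_of_nonneg_right hr (by positivity)
      _ = (C/lam) * (((i:ℝ)+1)^(-(2*α)) * ((i:ℝ)+1) ^ (((2*m:ℕ)):ℝ)) := by
          rw [rpow_natCast]; ring
      _ = (C/lam) * ((i:ℝ)+1)^(2*(m:ℝ)-2*α) := by
          rw [← rpow_add hx]
          congr 1
          push_cast
          ring_nf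
  have hg : Summable (fun i : ℕ => ((i:ℝ)+1) ^ (2*(m:ℝ)-2*α)) := by
    have h0 : Summable (fun n : ℕ => ((n:ℝ)) ^ (2*(m:ℝ)-2*α)) :=
      Real.summable_nat_rpow.mpr (by linarith)
    refine (h0.comp_injective (add_left_injective 1)).congr fun i => ?_
    simp only [Function.comp]
    push_cast
    ring_nf
  have hgsum : Summable (fun i : ℕ => (C/lam) * ((i:ℝ)+1) ^ (2*(m:ℝ)-2*α)) := hg.mul_left _
  have hsf : Summable f := Summable.of_nonneg_of_le hfnn hf2 hgsum
  refine ⟨hsf, ?_⟩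
  -- split
  have hsplit : ∑' i, f i = ∑ i ∈ Finset.range N, f i + ∑' i, f (i + N) :=
    (Summable.sum_add_tsum_nat_add N hsf).symm
  -- head
  have hhead : ∑ i ∈ Finset.range N, f i ≤ (1 + c0⁻¹)^(2*m+1) * T^(2*m+1) := by
    have h1 : ∑ i ∈ Finset.range N, f i ≤ (N:ℝ)^(2*m+1) := by
      calc ∑ i ∈ Finset.range N, f i ≤ ∑ _i ∈ Finset.range N, (N:ℝ)^(2*m) := by
            apply Finset.sum_le_sum
            intro i hi
            refine (hf1 i).trans (pow_le_pow_left₀ (by positivity) ?_ _)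
            have : i + 1 ≤ N := Finset.mem_range.mp hi
            exact_mod_cast this
        _ = (N:ℝ) * (N:ℝ)^(2*m) := by
            rw [Finset.sum_const, Finset.card_range, nsmul_eq_mul]
        _ = (N:ℝ)^(2*m+1) := by ring
    refine h1.trans ?_
    rw [← mul_pow]
    apply pow_le_pow_left₀ (Nat.cast_nonneg N)
    have h2 : (1:ℝ) ≤ T * c0⁻¹ := by
      rw [← div_eq_mul_inv, le_div_iff₀ hc0pos, one_mul]
      exact hc0T
    nlinarith
  -- tail
  have hgs : Summable (fun i : ℕ => ((N:ℝ)+1+i)^(-s)) := by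
    refine ((summable_nat_add_iff N).mpr hg).congr fun i => ?_
    rw [← hexp]
    congr 1
    push_cast
    ring
  have htail1 : ∀ i : ℕ, f (i+N) ≤ (C/lam) * ((N:ℝ)+1+i) ^ (-s) := by
    intro i
    refine (hf2 (i+N)).trans_eq ?_
    rw [hexp]
    congr 2
    push_cast
    ring
  have hCT : C/lam = T ^ (2*α) := by
    rw [hT, ← rpow_mul hCl.le, one_div, inv_mul_cancel₀ (by positivity : (2*α) ≠ 0), rpow_one]
  have htail : ∑' i, f (i + N) ≤ T^(2*(m:ℝ)+1) / (s-1) := by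
    calc ∑' i, f (i + N) ≤ ∑' i : ℕ, (C/lam) * ((N:ℝ)+1+(i:ℝ))^(-s) :=
          ((summable_nat_add_iff N).mpr hsf).tsum_le_tsum htail1 (hgs.mul_left _)
      _ = (C/lam) * ∑' i : ℕ, ((N:ℝ)+1+(i:ℝ))^(-s) := tsum_mul_left
      _ ≤ (C/lam) * ((N:ℝ)^(1-s)/(s-1)) :=
          mul_le_mul_of_nonneg_left (tail_tsum_le hs hN1) hCl.le
      _ ≤ (C/lam) * (T^(1-s)/(s-1)) := by
          apply mul_le_mul_of_nonneg_left ?_ hCl.le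
          rw [div_le_div_iff_of_pos_right (by linarith : (0:ℝ) < s-1)]
          exact rpow_le_rpow_of_nonpos hTpos hTN (by linarith)
      _ = T^(2*(m:ℝ)+1) / (s-1) := by
          rw [hCT, mul_div_assoc', ← rpow_add hTpos]
          congr 2
          rw [hsdef]
          ring
  -- combine
  have hTpow : T^(2*m+1) = T ^ (2*(m:ℝ)+1) := by
    rw [← rpow_natCast T (2*m+1)]
    congr 1
    push_cast
    ring
  have htot : ∑' i, f i ≤ ((1 + c0⁻¹)^(2*m+1) + 1/(s-1)) * T ^ (2*(m:ℝ)+1) := by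
    rw [hsplit]
    have := add_le_add hhead htail
    rw [hTpow] at this
    refine this.trans_eq ?_
    ring
  refine htot.trans ?_
  have hTq : T ^ (2*(m:ℝ)+1) = C ^ q * lam ^ (-(2 * (m:ℝ) + 1) / (2 * α)) := by
    rw [hT, ← rpow_mul hCl.le]
    have e1 : 1/(2*α) * (2*(m:ℝ)+1) = q := by rw [hq]; ring
    rw [e1, div_rpow hC.le hlam.le, div_eq_mul_inv, ← rpow_neg hlam.le]
    congr 1
    rw [hq]
    ring
  rw [hTq]
  ring_nf
  rfl
end

section
/- Let (μ_i)_{i≥1} be positive reals with μ_i ≥ c i^(−2α) for constants c > 0 and α > m + 1/2, m a nonnegative integer, and let λ ∈ (0,1]. Then ∑_{i=1}^∞ (μ_i/(λ+μ_i)) · i^(2m) ≥ c' λ^(−(2m+1)/(2α)) for some constant c' > 0 depending only on c, α, m. -/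
open Real Finset

lemma step_pow (k : ℕ) (a : ℝ) (ha : 0 ≤ a) : (a+1)^(k+1) ≤ a^(k+1) + (k+1)*(a+1)^k := by
  have hb : (0:ℝ) < a + 1 := by linarith
  have hber : 1 + (k+1 : ℕ) * (a/(a+1) - 1) ≤ (a/(a+1))^(k+1) := by
    have hd : 0 ≤ a/(a+1) := div_nonneg ha hb.le
    have := one_add_mul_le_pow (a := a/(a+1) - 1) (by linarith) (k+1)
    have he : 1 + (a/(a+1) - 1) = a/(a+1) := by ring
    rw [he] at this
    exact this
  have h1 : (a/(a+1))^(k+1) * (a+1)^(k+1) = a^(k+1) := by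
    rw [div_pow, div_mul_cancel₀]
    positivity
  have h2 : (1 + (k+1 : ℕ) * (a/(a+1) - 1)) * (a+1)^(k+1) = (a+1)^(k+1) - (k+1)*(a+1)^k := by
    have : (a/(a+1) - 1) * (a+1) = -1 := by field_simp; ring
    have hpow : (a+1)^(k+1) = (a+1)^k * (a+1) := pow_succ _ _
    push_cast
    rw [hpow]; ring_nf
    field_simp
    ring
  nlinarith [mul_le_mul_of_nonneg_right hber (pow_nonneg hb.le (k+1)), pow_nonneg hb.le k]

lemma sum_pow_lb (k : ℕ) : ∀ n : ℕ, (n:ℝ)^(k+1) ≤ (k+1) * ∑ i ∈ Finset.range n, ((i:ℝ)+1)^k := by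
  intro n
  induction n with
  | zero => simp
  | succ n ih =>
    rw [Finset.sum_range_succ, mul_add]
    push_cast
    have := step_pow k (n:ℝ) (Nat.cast_nonneg n)
    push_cast at ih ⊢
    linarith

/-- Lower bound on the high-order effective dimension: the (possibly infinite) sum
`∑ (μ_i/(λ+μ_i)) i^{2m}` is at least `c' λ^{-(2m+1)/(2α)}`, witnessed by a partial sum. -/
theorem stmt3 (c α : ℝ) (m : ℕ) (hc : 0 < c) (hα : (m : ℝ) + 1 / 2 < α) :
    ∃ c' > 0, ∀ (μ : ℕ → ℝ) (lam : ℝ),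
      (∀ i : ℕ, 1 ≤ i → 0 < μ i) →
      (∀ i : ℕ, 1 ≤ i → c * (i : ℝ) ^ (-(2 * α)) ≤ μ i) →
      0 < lam → lam ≤ 1 →
      ∃ n : ℕ, c' * lam ^ (-(2 * (m : ℝ) + 1) / (2 * α)) ≤
        ∑ i ∈ Finset.range n, μ (i + 1) / (lam + μ (i + 1)) * ((i : ℝ) + 1) ^ (2 * m) := by
  have hα0 : 0 < α := by nlinarith [Nat.cast_nonneg (α := ℝ) m]
  set K : ℕ := 2 * m
  refine ⟨c / ((1 + c) * (K + 1) * 2 ^ (K + 1)), by positivity, ?_⟩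
  intro μ lam hpos hlow hlam0 hlam1
  set p : ℝ := 2 * α with hp
  have hp0 : 0 < p := by positivity
  set T : ℝ := lam ^ (-1 / p) with hTdef
  have hT0 : 0 < T := rpow_pos_of_pos hlam0 _
  have hT1 : 1 ≤ T := by
    have : lam ^ (-1 / p) ≥ lam ^ (0 : ℝ) := by
      apply rpow_le_rpow_of_exponent_ge hlam0 hlam1
      have h1p : 0 < 1 / p := by positivity
      rw [neg_div]; linarith
    simpa using this
  set N : ℕ := ⌊T⌋₊ with hNdef
  have hN1 : 1 ≤ N := Nat.le_floor (by exact_mod_cast hT1)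
  have hNT : (N : ℝ) ≤ T := Nat.floor_le hT0.le
  have hTN : T ≤ 2 * N := by
    have h1 : T < N + 1 := Nat.lt_floor_add_one T
    have h2 : (1 : ℝ) ≤ N := by exact_mod_cast hN1
    linarith
  refine ⟨N, ?_⟩
  -- key rpow identity: T ^ (-p) = lam
  have hTp : T ^ (-p) = lam := by
    rw [hTdef, ← Real.rpow_mul hlam0.le]
    rw [show -1 / p * (-p) = 1 by field_simp, rpow_one]
  -- termwise lower bound
  have hterm : ∀ i ∈ Finset.range N,
      c / (1 + c) * ((i : ℝ) + 1) ^ K ≤ μ (i + 1) / (lam + μ (i + 1)) * ((i : ℝ) + 1) ^ K := by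
    intro i hi
    rw [Finset.mem_range] at hi
    have hj1 : 1 ≤ i + 1 := Nat.le_add_left 1 i
    have hjT : ((i : ℝ) + 1) ≤ T := by
      have : (i : ℝ) + 1 ≤ N := by exact_mod_cast Nat.succ_le_of_lt hi
      linarith
    have hj0 : (0 : ℝ) < (i : ℝ) + 1 := by positivity
    have hμlam : c * lam ≤ μ (i + 1) := by
      have h1 : ((i : ℝ) + 1) ^ (-p) ≥ T ^ (-p) :=
        Real.rpow_le_rpow_of_nonpos hj0 hjT (by linarith)
      have h2 := hlow (i + 1) hj1
      rw [hTp] at h1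
      push_cast at h2
      calc c * lam ≤ c * ((i : ℝ) + 1) ^ (-p) := by
            apply mul_le_mul_of_nonneg_left h1 hc.le
        _ ≤ μ (i + 1) := by
            have : -(2 * α) = -p := by rw [hp]
            rw [this] at h2; exact h2
    have hμ0 : 0 < μ (i + 1) := hpos _ hj1
    have hfrac : c / (1 + c) ≤ μ (i + 1) / (lam + μ (i + 1)) := by
      rw [div_le_div_iff₀ (by linarith) (by linarith)]
      nlinarith
    exact mul_le_mul_of_nonneg_right hfrac (by positivity)
  have hsum1 : c / (1 + c) * ∑ i ∈ Finset.range N, ((i : ℝ) + 1) ^ K ≤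
      ∑ i ∈ Finset.range N, μ (i + 1) / (lam + μ (i + 1)) * ((i : ℝ) + 1) ^ K := by
    rw [Finset.mul_sum]
    exact Finset.sum_le_sum hterm
  have hsum2 : (N : ℝ) ^ (K + 1) ≤ (K + 1) * ∑ i ∈ Finset.range N, ((i : ℝ) + 1) ^ K :=
    sum_pow_lb K N
  have hKcast : ((K : ℕ) : ℝ) = 2 * (m : ℝ) := by simp only [K]; push_cast; ring
  -- rpow of lam equals T ^ (K+1)
  have hTK : lam ^ (-(2 * (m : ℝ) + 1) / (2 * α)) = T ^ (K + 1) := by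
    rw [hTdef, ← rpow_natCast (lam ^ (-1 / p)) (K + 1), ← Real.rpow_mul hlam0.le]
    congr 1
    have h1 : ((K + 1 : ℕ) : ℝ) = 2 * (m : ℝ) + 1 := by push_cast [hKcast]; ring
    rw [h1, hp]
    field_simp
  set S : ℝ := ∑ i ∈ Finset.range N, ((i : ℝ) + 1) ^ K with hS
  have key : c / ((1 + c) * (K + 1) * 2 ^ (K + 1)) * T ^ (K + 1) ≤ c / (1 + c) * S := by
    have hTN2 : T ^ (K + 1) ≤ 2 ^ (K + 1) * (N : ℝ) ^ (K + 1) := by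
      rw [← mul_pow]
      exact pow_le_pow_left₀ hT0.le hTN _
    have hc1 : (0 : ℝ) < 1 + c := by linarith
    have hK1 : (0 : ℝ) < (K : ℝ) + 1 := by positivity
    calc c / ((1 + c) * (K + 1) * 2 ^ (K + 1)) * T ^ (K + 1)
        ≤ c / ((1 + c) * (K + 1) * 2 ^ (K + 1)) * (2 ^ (K + 1) * (N : ℝ) ^ (K + 1)) :=
          mul_le_mul_of_nonneg_left hTN2 (by positivity)
      _ = c / ((1 + c) * ((K : ℝ) + 1)) * (N : ℝ) ^ (K + 1) := by
          rw [div_mul_eq_mul_div, div_mul_eq_mul_div, div_eq_div_iff (by positivity) (by positivity)]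
          ring
      _ ≤ c / ((1 + c) * ((K : ℝ) + 1)) * (((K : ℝ) + 1) * S) :=
          mul_le_mul_of_nonneg_left hsum2 (by positivity)
      _ = c / (1 + c) * S := by
          rw [div_mul_eq_mul_div, div_mul_eq_mul_div, div_eq_div_iff (by positivity) (by positivity)]
          ring
  rw [hTK]
  exact key.trans hsum1
end

section
/- Let (μ_i)_{i≥1} be a nonincreasing positive sequence tending to 0, and let f₀ = ∑_i f_i ψ_i in an L² space with orthonormal basis (ψ_i). For λ > 0 and 0 < r ≤ 1/2, suppose g := ∑_i (f_i / μ_i^{r+1/2}) ψ_i has ‖g‖₂ < ∞. Define f_λ = ∑_i (μ_i/(μ_i+λ)) f_i ψ_i. Then ∑_i ((λ/(μ_i+λ)) f_i)² / μ_i ≤ λ^{2r} ‖g‖₂². -/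
lemma key7 (m lam r fi gi : ℝ) (hm : 0 < m) (hlam : 0 < lam)
    (hr0 : 0 < r) (hr : r ≤ 1 / 2) (hfg : fi = gi * m ^ (r + 1 / 2)) :
    (lam / (m + lam) * fi) ^ 2 / m ≤ lam ^ (2 * r) * gi ^ 2 := by
  have hml : 0 < m + lam := by linarith
  have h1 : m ^ (2 * r) ≤ (m + lam) ^ (2 * r) :=
    Real.rpow_le_rpow hm.le (by linarith) (by linarith)
  have h2 : lam ^ (2 - 2 * r) ≤ (m + lam) ^ (2 - 2 * r) :=
    Real.rpow_le_rpow hlam.le (by linarith) (by linarith)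
  have hmain : lam ^ (2 - 2 * r) * m ^ (2 * r)
      ≤ (m + lam) ^ (2 - 2 * r) * (m + lam) ^ (2 * r) :=
    mul_le_mul h2 h1 (Real.rpow_nonneg hm.le _) (Real.rpow_nonneg hml.le _)
  have hR : (m + lam) ^ (2 - 2 * r) * (m + lam) ^ (2 * r) = (m + lam) ^ 2 := by
    rw [← Real.rpow_add hml]
    norm_num
  have hL : lam ^ (2 : ℕ) = lam ^ (2 * r) * lam ^ (2 - 2 * r) := by
    rw [← Real.rpow_add hlam, ← Real.rpow_natCast lam 2]
    norm_num
  -- rewrite fi^2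
  have hfi2 : fi ^ 2 = gi ^ 2 * (m ^ (2 * r) * m) := by
    rw [hfg, mul_pow, ← Real.rpow_natCast (m ^ (r + 1 / 2)) 2,
      ← Real.rpow_mul hm.le]
    rw [show (r + 1 / 2) * (2 : ℕ) = 2 * r + 1 by push_cast; ring,
      Real.rpow_add hm, Real.rpow_one]
  have hLHS : (lam / (m + lam) * fi) ^ 2 / m
      = gi ^ 2 * (lam ^ 2 * m ^ (2 * r)) / (m + lam) ^ 2 := by
    field_simp
    rw [hfi2]; ring
  rw [hLHS, div_le_iff₀ (by positivity)]
  calc gi ^ 2 * (lam ^ 2 * m ^ (2 * r))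
      = gi ^ 2 * lam ^ (2 * r) * (lam ^ (2 - 2 * r) * m ^ (2 * r)) := by
        rw [hL]; ring
    _ ≤ gi ^ 2 * lam ^ (2 * r) * ((m + lam) ^ (2 - 2 * r) * (m + lam) ^ (2 * r)) := by
        apply mul_le_mul_of_nonneg_left hmain (by positivity)
    _ = lam ^ (2 * r) * gi ^ 2 * (m + lam) ^ 2 := by rw [hR]; ring

/-- RKHS-norm bias bound `‖f_λ - f₀‖²_H ≤ λ^{2r} ‖L_K^{-r-1/2} f₀‖₂²` in sequence
space: with `g_i = f_i / μ_i^{r+1/2}` square-summable,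
`∑ ((λ/(μ_i+λ)) f_i)² / μ_i ≤ λ^{2r} ∑ g_i²`. -/
theorem stmt7 (μ f : ℕ → ℝ) (hpos : ∀ i, 0 < μ i)
    (hmono : ∀ i j : ℕ, i ≤ j → μ j ≤ μ i)
    (hlim : Filter.Tendsto μ Filter.atTop (nhds 0))
    (lam r : ℝ) (hlam : 0 < lam) (hr0 : 0 < r) (hr : r ≤ 1 / 2)
    (g : ℕ → ℝ) (hg : ∀ i, g i = f i / μ i ^ (r + 1 / 2))
    (hgsum : Summable (fun i => (g i) ^ 2)) :
    Summable (fun i => (lam / (μ i + lam) * f i) ^ 2 / μ i) ∧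
    (∑' i, (lam / (μ i + lam) * f i) ^ 2 / μ i) ≤ lam ^ (2 * r) * ∑' i, (g i) ^ 2 := by
  have hfg : ∀ i, f i = g i * μ i ^ (r + 1 / 2) := by
    intro i
    rw [hg i, div_mul_cancel₀ _ (Real.rpow_pos_of_pos (hpos i) (r + 1 / 2)).ne']
  have hkey : ∀ i, (lam / (μ i + lam) * f i) ^ 2 / μ i ≤ lam ^ (2 * r) * (g i) ^ 2 :=
    fun i => key7 (μ i) lam r (f i) (g i) (hpos i) hlam hr0 hr (hfg i)
  have hssum : Summable (fun i => lam ^ (2 * r) * (g i) ^ 2) := hgsum.mul_left _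
  have hsum : Summable (fun i => (lam / (μ i + lam) * f i) ^ 2 / μ i) :=
    Summable.of_nonneg_of_le (fun i => div_nonneg (sq_nonneg _) (hpos i).le) hkey hssum
  refine ⟨hsum, ?_⟩
  calc (∑' i, (lam / (μ i + lam) * f i) ^ 2 / μ i)
      ≤ ∑' i, lam ^ (2 * r) * (g i) ^ 2 := Summable.tsum_le_tsum hkey hsum hssum
    _ = lam ^ (2 * r) * ∑' i, (g i) ^ 2 := tsum_mul_left
end

section
/- Let (μ_i), (f_i) be real sequences with μ_i > 0, and suppose ∑_i i^α |f_i| < ∞ for some α > k + 1/2 with k a nonnegative integer. Assume μ_i ≥ c i^{−2α} for some c > 0 and let λ ∈ (0,1]. Then ∑_{i=1}^∞ (λ/(λ+μ_i)) |f_i| i^k ≤ C λ^{1/2 − k/(2α)} ∑_i i^α |f_i| for a constant C depending only on c, α, k. -/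
lemma key11 (c α : ℝ) (k : ℕ) (hc : 0 < c) (hα : (k : ℝ) + 1 / 2 < α)
    (x lam : ℝ) (hx : 1 ≤ x) (hl : 0 < lam) (hl1 : lam ≤ 1) :
    lam / (lam + c * x ^ (-(2 * α))) * x ^ (k : ℝ) ≤
      (1 + 1 / c) * lam ^ (1 / 2 - (k : ℝ) / (2 * α)) * x ^ α := by
  have hk0 : (0:ℝ) ≤ (k:ℝ) := Nat.cast_nonneg k
  have hα0 : 0 < α := by linarith
  have hx0 : 0 < x := lt_of_lt_of_le one_pos hx
  have ht : 0 < x ^ (-(2 * α)) := Real.rpow_pos_of_pos hx0 _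
  have hβ : 1 / 2 - (k : ℝ) / (2 * α) = (α - k) / (2 * α) := by
    field_simp
  have hlβ : 0 < lam ^ (1 / 2 - (k : ℝ) / (2 * α)) := Real.rpow_pos_of_pos hl _
  have hxα : 0 < x ^ α := Real.rpow_pos_of_pos hx0 _
  rcases le_total lam (x ^ (-(2 * α))) with h | h
  · -- small i case: x ≤ lam^{-1/(2α)}
    have h1 : lam ^ (1 / (2 * α)) ≤ x⁻¹ := by
      have := Real.rpow_le_rpow hl.le h (by positivity : (0:ℝ) ≤ 1 / (2 * α))
      rwa [← Real.rpow_mul hx0.le,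
        show -(2 * α) * (1 / (2 * α)) = -1 by field_simp, Real.rpow_neg_one] at this
    have hxle : x ≤ lam ^ (-(1 / (2 * α))) := by
      rw [Real.rpow_neg hl.le]
      rw [le_inv_comm₀ hx0 (Real.rpow_pos_of_pos hl _)] at *
      exact h1
    have step1 : lam / (lam + c * x ^ (-(2 * α))) ≤ lam / (c * x ^ (-(2 * α))) := by
      apply div_le_div_of_nonneg_left hl.le (by positivity)
      linarith
    have hp : x ^ (2 * α) ≠ 0 := (Real.rpow_pos_of_pos hx0 _).ne'
    have e : x ^ (α + (k:ℝ)) * x ^ α = x ^ (k:ℝ) * x ^ (2 * α) := by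
      rw [← Real.rpow_add hx0, ← Real.rpow_add hx0]
      congr 1; ring
    have step2 : lam / (c * x ^ (-(2 * α))) * x ^ (k:ℝ)
        = (lam / c) * x ^ (α + (k:ℝ)) * x ^ α := by
      rw [mul_assoc (lam / c), e, Real.rpow_neg hx0.le]
      field_simp
    have step3 : x ^ (α + (k:ℝ)) ≤ lam ^ (-((α + (k:ℝ)) / (2 * α))) := by
      calc x ^ (α + (k:ℝ)) ≤ (lam ^ (-(1 / (2 * α)))) ^ (α + (k:ℝ)) :=
            Real.rpow_le_rpow hx0.le hxle (by positivity)
        _ = lam ^ (-((α + (k:ℝ)) / (2 * α))) := by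
            rw [← Real.rpow_mul hl.le]; ring_nf
    have step4 : (lam / c) * lam ^ (-((α + (k:ℝ)) / (2 * α)))
        = (1 / c) * lam ^ (1 / 2 - (k : ℝ) / (2 * α)) := by
      rw [hβ, show (α - (k:ℝ)) / (2 * α) = 1 + -((α + (k:ℝ)) / (2 * α)) by field_simp; ring,
        Real.rpow_add hl, Real.rpow_one]
      ring
    calc lam / (lam + c * x ^ (-(2 * α))) * x ^ (k:ℝ)
        ≤ lam / (c * x ^ (-(2 * α))) * x ^ (k:ℝ) := by
          apply mul_le_mul_of_nonneg_right step1 (by positivity)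
      _ = (lam / c) * x ^ (α + (k:ℝ)) * x ^ α := step2
      _ ≤ (lam / c) * lam ^ (-((α + (k:ℝ)) / (2 * α))) * x ^ α := by
          apply mul_le_mul_of_nonneg_right _ hxα.le
          exact mul_le_mul_of_nonneg_left step3 (by positivity)
      _ = (1 / c) * lam ^ (1 / 2 - (k : ℝ) / (2 * α)) * x ^ α := by rw [step4]
      _ ≤ (1 + 1 / c) * lam ^ (1 / 2 - (k : ℝ) / (2 * α)) * x ^ α := by
          apply mul_le_mul_of_nonneg_right _ hxα.le
          apply mul_le_mul_of_nonneg_right _ hlβ.le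
          linarith
  · -- large i case: lam^{-1/(2α)} ≤ x
    have h1 : x⁻¹ ≤ lam ^ (1 / (2 * α)) := by
      have := Real.rpow_le_rpow ht.le h (by positivity : (0:ℝ) ≤ 1 / (2 * α))
      rwa [← Real.rpow_mul hx0.le,
        show -(2 * α) * (1 / (2 * α)) = -1 by field_simp, Real.rpow_neg_one] at this
    have hxge : lam ^ (-(1 / (2 * α))) ≤ x := by
      rw [Real.rpow_neg hl.le]
      rw [inv_le_comm₀ (Real.rpow_pos_of_pos hl _) hx0]
      exact h1
    have step1 : lam / (lam + c * x ^ (-(2 * α))) ≤ 1 := by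
      rw [div_le_one (by positivity)]
      have : 0 < c * x ^ (-(2 * α)) := by positivity
      linarith
    have step3 : x ^ ((k:ℝ) - α) ≤ lam ^ (1 / 2 - (k : ℝ) / (2 * α)) := by
      calc x ^ ((k:ℝ) - α) ≤ (lam ^ (-(1 / (2 * α)))) ^ ((k:ℝ) - α) :=
            Real.rpow_le_rpow_of_nonpos (Real.rpow_pos_of_pos hl _) hxge (by linarith)
        _ = lam ^ (1 / 2 - (k : ℝ) / (2 * α)) := by
            rw [← Real.rpow_mul hl.le, hβ]
            congr 1; field_simp; ring
    calc lam / (lam + c * x ^ (-(2 * α))) * x ^ (k:ℝ)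
        ≤ 1 * x ^ (k:ℝ) := by
          apply mul_le_mul_of_nonneg_right step1 (by positivity)
      _ = x ^ ((k:ℝ) - α) * x ^ α := by
          rw [one_mul, ← Real.rpow_add hx0]; ring_nf
      _ ≤ lam ^ (1 / 2 - (k : ℝ) / (2 * α)) * x ^ α :=
          mul_le_mul_of_nonneg_right step3 hxα.le
      _ ≤ (1 + 1 / c) * lam ^ (1 / 2 - (k : ℝ) / (2 * α)) * x ^ α := by
          rw [mul_assoc]
          nth_rewrite 1 [← one_mul (lam ^ _ * x ^ α)]
          apply mul_le_mul_of_nonneg_right _ (by positivity)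
          have : 0 < 1/c := by positivity
          linarith

/-- Bias bound `∑ (λ/(λ+μ_i)) |f_i| i^k ≤ C λ^{1/2 - k/(2α)} ∑ i^α |f_i|`
for eigenvalues `μ_i ≥ c i^{-2α}` and Hölder-class coefficients. -/
theorem stmt11 (c α : ℝ) (k : ℕ) (hc : 0 < c) (hα : (k : ℝ) + 1 / 2 < α) :
    ∃ C > 0, ∀ (μ f : ℕ → ℝ) (lam : ℝ),
      (∀ i : ℕ, 1 ≤ i → 0 < μ i) →
      (∀ i : ℕ, 1 ≤ i → c * (i : ℝ) ^ (-(2 * α)) ≤ μ i) →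
      Summable (fun i : ℕ => ((i : ℝ) + 1) ^ α * |f (i + 1)|) →
      0 < lam → lam ≤ 1 →
      Summable (fun i : ℕ => lam / (lam + μ (i + 1)) * |f (i + 1)| * ((i : ℝ) + 1) ^ (k : ℕ)) ∧
      (∑' i : ℕ, lam / (lam + μ (i + 1)) * |f (i + 1)| * ((i : ℝ) + 1) ^ (k : ℕ)) ≤
        C * lam ^ (1 / 2 - (k : ℝ) / (2 * α)) *
          ∑' i : ℕ, ((i : ℝ) + 1) ^ α * |f (i + 1)| := by
  refine ⟨1 + 1 / c, by positivity, ?_⟩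
  intro μ f lam hμpos hμlb hsum hl hl1
  set β := 1 / 2 - (k : ℝ) / (2 * α) with hβdef
  have hlβ : 0 < lam ^ β := Real.rpow_pos_of_pos hl _
  -- termwise bound
  have hterm : ∀ i : ℕ,
      lam / (lam + μ (i + 1)) * |f (i + 1)| * ((i : ℝ) + 1) ^ (k : ℕ) ≤
      ((1 + 1 / c) * lam ^ β) * (((i : ℝ) + 1) ^ α * |f (i + 1)|) := by
    intro i
    have hx : (1:ℝ) ≤ (i:ℝ) + 1 := le_add_of_nonneg_left (Nat.cast_nonneg i)
    have hx0 : (0:ℝ) < (i:ℝ) + 1 := by positivity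
    have hμ := hμpos (i + 1) (Nat.le_add_left 1 i)
    have hlb := hμlb (i + 1) (Nat.le_add_left 1 i)
    have hcast : ((i + 1 : ℕ) : ℝ) = (i : ℝ) + 1 := by push_cast; ring
    rw [hcast] at hlb
    have hden : 0 < lam + c * ((i:ℝ)+1) ^ (-(2*α)) := by positivity
    have hfrac : lam / (lam + μ (i + 1)) ≤ lam / (lam + c * ((i:ℝ)+1) ^ (-(2*α))) :=
      div_le_div_of_nonneg_left hl.le hden (by linarith)
    have hkey := key11 c α k hc hα ((i:ℝ)+1) lam hx hl hl1
    have hnp : ((i : ℝ) + 1) ^ (k : ℕ) = ((i : ℝ) + 1) ^ (k : ℝ) := by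
      rw [Real.rpow_natCast]
    calc lam / (lam + μ (i + 1)) * |f (i + 1)| * ((i : ℝ) + 1) ^ (k : ℕ)
        = (lam / (lam + μ (i + 1)) * ((i : ℝ) + 1) ^ (k : ℝ)) * |f (i + 1)| := by
          rw [hnp]; ring
      _ ≤ (lam / (lam + c * ((i:ℝ)+1) ^ (-(2*α))) * ((i : ℝ) + 1) ^ (k : ℝ)) * |f (i + 1)| := by
          apply mul_le_mul_of_nonneg_right _ (abs_nonneg _)
          exact mul_le_mul_of_nonneg_right hfrac (by positivity)
      _ ≤ ((1 + 1 / c) * lam ^ β * ((i:ℝ)+1) ^ α) * |f (i + 1)| :=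
          mul_le_mul_of_nonneg_right hkey (abs_nonneg _)
      _ = ((1 + 1 / c) * lam ^ β) * (((i : ℝ) + 1) ^ α * |f (i + 1)|) := by ring
  have hg : Summable (fun i : ℕ => ((1 + 1 / c) * lam ^ β) * (((i : ℝ) + 1) ^ α * |f (i + 1)|)) :=
    hsum.mul_left _
  have hnonneg : ∀ i : ℕ, 0 ≤ lam / (lam + μ (i + 1)) * |f (i + 1)| * ((i : ℝ) + 1) ^ (k : ℕ) := by
    intro i
    have hμ := hμpos (i + 1) (Nat.le_add_left 1 i)
    have h0 : 0 ≤ lam / (lam + μ (i + 1)) := div_nonneg hl.le (by linarith)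
    exact mul_nonneg (mul_nonneg h0 (abs_nonneg _)) (by positivity)
  have hS : Summable (fun i : ℕ => lam / (lam + μ (i + 1)) * |f (i + 1)| * ((i : ℝ) + 1) ^ (k : ℕ)) :=
    Summable.of_nonneg_of_le hnonneg hterm hg
  refine ⟨hS, ?_⟩
  calc (∑' i : ℕ, lam / (lam + μ (i + 1)) * |f (i + 1)| * ((i : ℝ) + 1) ^ (k : ℕ))
      ≤ ∑' i : ℕ, ((1 + 1 / c) * lam ^ β) * (((i : ℝ) + 1) ^ α * |f (i + 1)|) :=
        Summable.tsum_le_tsum hterm hS hg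
    _ = ((1 + 1 / c) * lam ^ β) * ∑' i : ℕ, ((i : ℝ) + 1) ^ α * |f (i + 1)| := tsum_mul_left
    _ = (1 + 1 / c) * lam ^ β * ∑' i : ℕ, ((i : ℝ) + 1) ^ α * |f (i + 1)| := by ring
end

section
/- Let (μ_i) be positive reals with μ_i ≍ i^{−2α} (i.e., c i^{−2α} ≤ μ_i ≤ C i^{−2α}) for α > k + 1/2 with k a nonnegative integer, λ ∈ (0,1], and define κ̃²_m = ∑_i (μ_i/(λ+μ_i)) i^{2m} for m ∈ {0, k}. Then there is a constant C' (depending only on c, C, α, k) such that for every square-summable sequence (f_i): ∑_i f_i² i^{2k} ≤ C' (κ̃²_k / κ̃²_0) · ∑_i f_i² (λ+μ_i)/μ_i. -/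
open Finset Real

private lemma aux_sum_pow_lower (k M : ℕ) :
    ((M : ℝ) ^ (2 * k + 1)) / (2 * k + 1) ≤ ∑ i ∈ Finset.range M, ((i : ℝ) + 1) ^ (2 * k) := by
  induction M with
  | zero => simp
  | succ M ih =>
    rw [Finset.sum_range_succ]
    have hM : (0:ℝ) ≤ (M:ℝ) := Nat.cast_nonneg M
    have hpos : (0:ℝ) < 2 * k + 1 := by positivity
    have key : ((M : ℝ) + 1) ^ (2 * k + 1) - (M : ℝ) ^ (2 * k + 1)
        ≤ (2 * (k:ℝ) + 1) * ((M : ℝ) + 1) ^ (2 * k) := by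
      have h := geom_sum₂_mul ((M:ℝ)+1) (M:ℝ) (2*k+1)
      have hsub : ((M:ℝ)+1) - (M:ℝ) = 1 := by ring
      rw [hsub, mul_one] at h
      rw [← h]
      have hbd : ∀ i ∈ Finset.range (2*k+1),
          ((M:ℝ)+1) ^ i * (M:ℝ) ^ (2*k+1-1-i) ≤ ((M:ℝ)+1) ^ (2*k) := by
        intro i hi
        have hi' : i ≤ 2*k := by
          have := Finset.mem_range.mp hi; omega
        have h1 : (M:ℝ) ^ (2*k+1-1-i) ≤ ((M:ℝ)+1) ^ (2*k+1-1-i) :=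
          pow_le_pow_left₀ hM (by linarith) _
        calc ((M:ℝ)+1) ^ i * (M:ℝ) ^ (2*k+1-1-i)
            ≤ ((M:ℝ)+1) ^ i * ((M:ℝ)+1) ^ (2*k+1-1-i) := by
              apply mul_le_mul_of_nonneg_left h1 (by positivity)
          _ = ((M:ℝ)+1) ^ (i + (2*k+1-1-i)) := by rw [← pow_add]
          _ = ((M:ℝ)+1) ^ (2*k) := by congr 1; omega
      calc (∑ i ∈ Finset.range (2*k+1), ((M:ℝ)+1) ^ i * (M:ℝ) ^ (2*k+1-1-i))
          ≤ ∑ i ∈ Finset.range (2*k+1), ((M:ℝ)+1) ^ (2*k) :=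
            Finset.sum_le_sum hbd
        _ = (2*(k:ℝ)+1) * ((M:ℝ)+1) ^ (2*k) := by
            rw [Finset.sum_const, Finset.card_range]; push_cast; ring
    have hstep : (((M:ℝ)+1) ^ (2*k+1)) / (2*k+1)
        ≤ ((M:ℝ) ^ (2*k+1)) / (2*k+1) + ((M:ℝ)+1) ^ (2*k) := by
      rw [div_add' _ _ _ hpos.ne', div_le_div_iff₀ hpos hpos]
      push_cast
      nlinarith [key]
    push_cast
    push_cast at ih hstep
    linarith

private lemma aux_rpow_step {β : ℝ} (hβ : 1 < β) {x : ℝ} (hx : 1 ≤ x) :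
    (β - 1) * (x + 1) ^ (-β) ≤ x ^ (1 - β) - (x + 1) ^ (1 - β) := by
  have hx0 : (0:ℝ) < x := lt_of_lt_of_le one_pos hx
  obtain ⟨ξ, hξ, hslope⟩ := exists_hasDerivAt_eq_slope (fun y => y ^ (1-β))
      (fun y => (1-β) * y ^ (-β)) (by linarith : x < x + 1)
      (fun y hy => by
        have hy0 : y ≠ 0 := by
          have h1 := hy.1; intro h0; rw [h0] at h1; linarith
        exact (Real.continuousAt_rpow_const y (1-β) (Or.inl hy0)).continuousWithinAt)
      (fun y hy => by
        have hy0 : y ≠ 0 := by have h1 := hy.1; intro h0; rw [h0] at h1; linarith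
        have h := Real.hasDerivAt_rpow_const (x := y) (p := 1-β) (Or.inl hy0)
        have : (1-β) - 1 = -β := by ring
        rwa [this] at h)
  have hξ0 : 0 < ξ := lt_trans hx0 hξ.1
  have hξx : ξ ≤ x + 1 := le_of_lt hξ.2
  have hmono : (x+1) ^ (-β) ≤ ξ ^ (-β) :=
    Real.rpow_le_rpow_of_nonpos hξ0 hξx (by linarith)
  have hs : (1-β) * ξ ^ (-β) = (x+1) ^ (1-β) - x ^ (1-β) := by
    simpa using hslope
  nlinarith [hmono, hs, Real.rpow_nonneg (le_of_lt hξ0) (-β)]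

private lemma aux_tail {β : ℝ} (hβ : 1 < β) {N : ℕ} (hN : 1 ≤ N) :
    ∑' i : ℕ, ((i : ℝ) + (N:ℝ) + 1) ^ (-β) ≤ (N : ℝ) ^ (1 - β) / (β - 1) := by
  have hN0 : (0:ℝ) < N := by exact_mod_cast hN
  apply Real.tsum_le_of_sum_range_le (fun n => Real.rpow_nonneg (by positivity) _)
  intro n
  set g : ℕ → ℝ := fun i => ((i:ℝ) + N) ^ (1-β) / (β-1) with hg
  have key : ∀ i : ℕ, ((i:ℝ) + N + 1) ^ (-β) ≤ g i - g (i+1) := by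
    intro i
    have hx : (1:ℝ) ≤ (i:ℝ) + N := by
      have : (1:ℝ) ≤ (N:ℝ) := by exact_mod_cast hN
      have : (0:ℝ) ≤ (i:ℝ) := Nat.cast_nonneg i
      linarith [this]
    have h := aux_rpow_step hβ hx
    have hβ1 : (0:ℝ) < β - 1 := by linarith
    show ((i:ℝ) + N + 1) ^ (-β) ≤ ((i:ℝ) + N) ^ (1-β) / (β-1) - (((i+1:ℕ):ℝ) + N) ^ (1-β) / (β-1)
    rw [← sub_div, le_div_iff₀ hβ1]
    push_cast
    calc ((i:ℝ) + N + 1) ^ (-β) * (β - 1) = (β-1) * (((i:ℝ)+N) + 1) ^ (-β) := by ring_nf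
      _ ≤ ((i:ℝ)+N) ^ (1-β) - (((i:ℝ)+N)+1) ^ (1-β) := h
      _ = ((i:ℝ)+N) ^ (1-β) - ((i:ℝ)+1+N) ^ (1-β) := by ring_nf
  calc ∑ i ∈ Finset.range n, ((i:ℝ) + N + 1) ^ (-β)
      ≤ ∑ i ∈ Finset.range n, (g i - g (i+1)) := Finset.sum_le_sum (fun i _ => key i)
    _ = g 0 - g n := Finset.sum_range_sub' g n
    _ ≤ g 0 := by
        have h0 : 0 ≤ g n := by
          rw [hg]
          have h1 : (0:ℝ) ≤ ((n:ℝ) + N) := by positivity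
          exact div_nonneg (Real.rpow_nonneg h1 (1-β)) (by linarith)
        linarith
    _ = (N:ℝ) ^ (1-β) / (β-1) := by rw [hg]; norm_num


private lemma aux_pointwise {α lam A m : ℝ} (hα : 0 < α) (hlam : 0 < lam) (hA : 1 ≤ A)
    {i : ℕ} (hi : 1 ≤ i) (hm : 0 ≤ m) (hmα : m ≤ α)
    {g : ℝ} (hg0 : 0 ≤ g) (hg1 : g ≤ 1) (hgu : g ≤ A * (i:ℝ) ^ (-(2*α)) / lam) :
    (i:ℝ) ^ (2*m) * g ≤ (A/lam) ^ (m/α) := by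
  have hi0 : (0:ℝ) < i := by exact_mod_cast hi
  have hi1 : (1:ℝ) ≤ i := by exact_mod_cast hi
  set t : ℝ := (i:ℝ) ^ (2*α) with ht
  have ht0 : 0 < t := Real.rpow_pos_of_pos hi0 _
  have ht1 : 1 ≤ t := Real.one_le_rpow hi1 (by positivity)
  have hAl : 0 < A / lam := by positivity
  have him : (i:ℝ) ^ (2*m) = t ^ (m/α) := by
    rw [ht, ← Real.rpow_mul (le_of_lt hi0)]
    congr 1
    field_simp
  have hineg : (i:ℝ) ^ (-(2*α)) = t⁻¹ := by
    rw [ht, ← Real.rpow_neg_one t, ht, ← Real.rpow_mul (le_of_lt hi0)]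
    congr 1; ring
  rw [him]
  rcases le_or_gt t (A/lam) with hcase | hcase
  · calc t ^ (m/α) * g ≤ t ^ (m/α) * 1 :=
        mul_le_mul_of_nonneg_left hg1 (Real.rpow_nonneg (le_of_lt ht0) _)
      _ = t ^ (m/α) := mul_one _
      _ ≤ (A/lam) ^ (m/α) := Real.rpow_le_rpow (le_of_lt ht0) hcase (by positivity)
  · have hgu' : g ≤ (A/lam) * t⁻¹ := by
      rw [hineg] at hgu
      calc g ≤ A * t⁻¹ / lam := hgu
        _ = (A/lam) * t⁻¹ := by ring
    calc t ^ (m/α) * g ≤ t ^ (m/α) * ((A/lam) * t⁻¹) :=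
          mul_le_mul_of_nonneg_left hgu' (Real.rpow_nonneg (le_of_lt ht0) _)
      _ = (A/lam) * t ^ (m/α - 1) := by
          rw [Real.rpow_sub ht0, Real.rpow_one]; ring
      _ ≤ (A/lam) * (A/lam) ^ (m/α - 1) := by
          apply mul_le_mul_of_nonneg_left _ (le_of_lt hAl)
          apply Real.rpow_le_rpow_of_nonpos hAl (le_of_lt hcase)
          have : m / α ≤ 1 := by
            rw [div_le_one hα]; exact hmα
          linarith
      _ = (A/lam) ^ (m/α) := by
          nth_rewrite 1 [← Real.rpow_one (A/lam)]
          rw [← Real.rpow_add hAl]; congr 1; ring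


private lemma aux_summable_shift {q : ℝ} (hq : q < -1) :
    Summable (fun i : ℕ => ((i:ℝ) + 1) ^ q) := by
  have h := Real.summable_nat_rpow.mpr hq
  have h2 := (summable_nat_add_iff 1).mpr h
  apply h2.congr
  intro n
  push_cast
  rfl

private lemma aux_g_le_one {μ lam : ℝ} (hμ : 0 < μ) (hlam : 0 < lam) :
    μ / (lam + μ) ≤ 1 := by
  rw [div_le_one (by linarith)]; linarith

private lemma aux_g_nonneg {μ lam : ℝ} (hμ : 0 < μ) (hlam : 0 < lam) :
    0 ≤ μ / (lam + μ) := by positivity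

private lemma aux_S0_up {C α : ℝ} (hC : 0 < C) (hα2 : 1 < 2*α)
    {μ : ℕ → ℝ} {lam : ℝ}
    (hμpos : ∀ i : ℕ, 1 ≤ i → 0 < μ i)
    (hupp : ∀ i : ℕ, 1 ≤ i → μ i ≤ C * (i : ℝ) ^ (-(2 * α)))
    (hlam0 : 0 < lam) (hlam1 : lam ≤ 1) :
    Summable (fun i : ℕ => μ (i+1) / (lam + μ (i+1))) ∧
    ∑' i : ℕ, μ (i+1) / (lam + μ (i+1)) ≤
      ((2 + 1/(2*α-1)) * (max C 1) ^ (1/(2*α))) * lam ^ (-(1/(2*α))) := by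
  obtain ⟨A, hA⟩ : ∃ A:ℝ, A = max C 1 := ⟨_, rfl⟩
  rw [← hA]
  have hA1 : (1:ℝ) ≤ A := hA ▸ le_max_right _ _
  have hA0 : (0:ℝ) < A := by linarith
  have hCA : C ≤ A := hA ▸ le_max_left _ _
  -- bounds on g
  have hgpos : ∀ i : ℕ, 1 ≤ i → 0 < lam + μ i := fun i hi => by
    have := hμpos i hi; linarith
  have hg1 : ∀ i : ℕ, 1 ≤ i → μ i / (lam + μ i) ≤ 1 := fun i hi =>
    aux_g_le_one (hμpos i hi) hlam0
  have hgu : ∀ i : ℕ, 1 ≤ i → μ i / (lam + μ i) ≤ (A/lam) * (i:ℝ) ^ (-(2*α)) := by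
    intro i hi
    have h1 : μ i / (lam + μ i) ≤ μ i / lam := by
      apply div_le_div_of_nonneg_left (le_of_lt (hμpos i hi)) hlam0
      linarith [hμpos i hi]
    have h2 : μ i / lam ≤ C * (i:ℝ) ^ (-(2*α)) / lam := by
      gcongr
      exact hupp i hi
    have h3 : C * (i:ℝ) ^ (-(2*α)) / lam ≤ A * (i:ℝ) ^ (-(2*α)) / lam := by
      have hnn : (0:ℝ) ≤ (i:ℝ) ^ (-(2*α)) := Real.rpow_nonneg (Nat.cast_nonneg i) _
      gcongr
    calc μ i / (lam + μ i) ≤ A * (i:ℝ) ^ (-(2*α)) / lam := le_trans h1 (le_trans h2 h3)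
      _ = (A/lam) * (i:ℝ) ^ (-(2*α)) := by ring
  -- summability
  have hsummaj : Summable (fun i : ℕ => (A/lam) * ((i:ℝ)+1) ^ (-(2*α))) :=
    (aux_summable_shift (by linarith)).mul_left _
  have hsum : Summable (fun i : ℕ => μ (i+1) / (lam + μ (i+1))) := by
    apply Summable.of_nonneg_of_le
      (fun i => aux_g_nonneg (hμpos (i+1) (by omega)) hlam0)
      (fun i => ?_) hsummaj
    have := hgu (i+1) (by omega)
    calc μ (i+1) / (lam + μ (i+1)) ≤ (A/lam) * ((i+1:ℕ):ℝ) ^ (-(2*α)) := this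
      _ = (A/lam) * ((i:ℝ)+1) ^ (-(2*α)) := by push_cast; rfl
  refine ⟨hsum, ?_⟩
  -- the split
  obtain ⟨x, hx⟩ : ∃ x:ℝ, x = (A/lam) ^ (1/(2*α)) := ⟨_, rfl⟩
  have hAl1 : (1:ℝ) ≤ A / lam := by
    rw [le_div_iff₀ hlam0]; linarith
  have hx1 : (1:ℝ) ≤ x := hx ▸ Real.one_le_rpow hAl1 (by positivity)
  have hx0 : (0:ℝ) < x := by linarith
  obtain ⟨N, hN⟩ : ∃ N:ℕ, N = ⌈x⌉₊ := ⟨_, rfl⟩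
  have hN1 : 1 ≤ N := by
    rw [hN, Nat.one_le_ceil_iff]; linarith
  have hxN : x ≤ (N:ℝ) := by rw [hN]; exact Nat.le_ceil x
  have hNx : (N:ℝ) ≤ 2*x := by
    have := Nat.ceil_lt_add_one (le_of_lt hx0)
    rw [hN]; linarith
  have hxpow : x ^ (2*α) = A/lam := by
    rw [hx, ← Real.rpow_mul (by positivity)]
    rw [show 1/(2*α) * (2*α) = 1 by field_simp; exact div_self (by linarith)]
    exact Real.rpow_one _
  have hsplit := (hsum.sum_add_tsum_nat_add N).symm
  have hfirst : ∑ i ∈ Finset.range N, μ (i+1) / (lam + μ (i+1)) ≤ (N:ℝ) := by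
    calc ∑ i ∈ Finset.range N, μ (i+1) / (lam + μ (i+1))
        ≤ ∑ i ∈ Finset.range N, (1:ℝ) :=
          Finset.sum_le_sum (fun i _ => hg1 (i+1) (by omega))
      _ = (N:ℝ) := by simp
  have htail0 : ∀ i : ℕ, μ (i+N+1) / (lam + μ (i+N+1)) ≤ (A/lam) * ((i:ℝ)+(N:ℝ)+1) ^ (-(2*α)) := by
    intro i
    have := hgu (i+N+1) (by omega)
    calc μ (i+N+1) / (lam + μ (i+N+1)) ≤ (A/lam) * ((i+N+1:ℕ):ℝ) ^ (-(2*α)) := this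
      _ = (A/lam) * ((i:ℝ)+(N:ℝ)+1) ^ (-(2*α)) := by push_cast; rfl
  have htailsum : Summable (fun i : ℕ => (A/lam) * ((i:ℝ)+(N:ℝ)+1) ^ (-(2*α))) := by
    have h := Real.summable_nat_rpow.mpr (show -(2*α) < -1 by linarith)
    have h2 := (summable_nat_add_iff (N+1)).mpr h
    apply (h2.mul_left (A/lam)).congr
    intro n; push_cast; ring_nf
  have htail : ∑' i : ℕ, μ (i+N+1) / (lam + μ (i+N+1)) ≤ x / (2*α-1) := by
    have h1 : ∑' i : ℕ, μ (i+N+1) / (lam + μ (i+N+1))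
        ≤ ∑' i : ℕ, (A/lam) * ((i:ℝ)+(N:ℝ)+1) ^ (-(2*α)) := by
      apply Summable.tsum_le_tsum htail0 _ htailsum
      exact (summable_nat_add_iff N).mpr hsum
    have h2 : ∑' i : ℕ, (A/lam) * ((i:ℝ)+(N:ℝ)+1) ^ (-(2*α))
        = (A/lam) * ∑' i : ℕ, ((i:ℝ)+(N:ℝ)+1) ^ (-(2*α)) := tsum_mul_left
    have h3 := aux_tail (show (1:ℝ) < 2*α by linarith) hN1
    have h4 : (N:ℝ) ^ (1-2*α) ≤ x ^ (1-2*α) :=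
      Real.rpow_le_rpow_of_nonpos hx0 hxN (by linarith)
    have h5 : (A/lam) * ((N:ℝ) ^ (1-2*α) / (2*α-1)) ≤ x / (2*α-1) := by
      rw [← hxpow]
      have : x ^ (2*α) * (x ^ (1-2*α) / (2*α-1)) = x / (2*α-1) := by
        rw [mul_div_assoc', ← Real.rpow_add hx0]
        norm_num
      rw [← this]
      exact mul_le_mul_of_nonneg_left ((div_le_div_iff_of_pos_right (by linarith)).mpr h4)
        (le_of_lt (Real.rpow_pos_of_pos hx0 _))
    calc ∑' i : ℕ, μ (i+N+1) / (lam + μ (i+N+1))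
        ≤ (A/lam) * ∑' i : ℕ, ((i:ℝ)+(N:ℝ)+1) ^ (-(2*α)) := by rw [← h2]; exact h1
      _ ≤ (A/lam) * ((N:ℝ) ^ (1-2*α) / (2*α-1)) :=
          mul_le_mul_of_nonneg_left h3 (by positivity)
      _ ≤ x / (2*α-1) := h5
  -- combine
  have hcomb : ∑' i : ℕ, μ (i+1) / (lam + μ (i+1)) ≤ (2 + 1/(2*α-1)) * x := by
    rw [hsplit]
    calc (∑ i ∈ Finset.range N, μ (i+1) / (lam + μ (i+1)))
          + ∑' (i : ℕ), μ (i + N + 1) / (lam + μ (i + N + 1))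
        ≤ (N:ℝ) + x/(2*α-1) := add_le_add hfirst htail
      _ ≤ 2*x + x/(2*α-1) := by linarith
      _ = (2 + 1/(2*α-1)) * x := by ring
  calc ∑' i : ℕ, μ (i+1) / (lam + μ (i+1)) ≤ (2 + 1/(2*α-1)) * x := hcomb
    _ = ((2 + 1/(2*α-1)) * A ^ (1/(2*α))) * lam ^ (-(1/(2*α))) := by
        rw [hx, Real.div_rpow (le_of_lt hA0) (le_of_lt hlam0),
          Real.rpow_neg (le_of_lt hlam0)]
        ring

private lemma aux_Sk_low {c C α : ℝ} (k : ℕ) (hc : 0 < c) (hC : 0 < C) (hα0 : 0 < α)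
    {μ : ℕ → ℝ} {lam : ℝ}
    (hμpos : ∀ i : ℕ, 1 ≤ i → 0 < μ i)
    (hlow : ∀ i : ℕ, 1 ≤ i → c * (i : ℝ) ^ (-(2 * α)) ≤ μ i)
    (hupp : ∀ i : ℕ, 1 ≤ i → μ i ≤ C * (i : ℝ) ^ (-(2 * α)))
    (hlam0 : 0 < lam) (hlam1 : lam ≤ 1)
    (hsum : Summable (fun i : ℕ => μ (i+1) / (lam + μ (i+1)) * ((i:ℝ)+1) ^ (2*k))) :
    (min (c/(1+C)) (1/((2:ℝ)^(2*k+2)*(2*(k:ℝ)+1)))) * (min c 1) ^ ((2*(k:ℝ)+1)/(2*α)) *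
      lam ^ (-((2*(k:ℝ)+1)/(2*α)))
      ≤ ∑' i : ℕ, μ (i+1) / (lam + μ (i+1)) * ((i:ℝ)+1) ^ (2*k) := by
  obtain ⟨a, ha⟩ : ∃ a:ℝ, a = min c 1 := ⟨_, rfl⟩
  rw [← ha]
  have ha0 : 0 < a := ha ▸ lt_min hc one_pos
  have ha1 : a ≤ 1 := ha ▸ min_le_right _ _
  have hac : a ≤ c := ha ▸ min_le_left _ _
  obtain ⟨e, he⟩ : ∃ e:ℝ, e = (2*(k:ℝ)+1)/(2*α) := ⟨_, rfl⟩
  rw [← he]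
  have he0 : 0 < e := by rw [he]; positivity
  obtain ⟨m, hm⟩ : ∃ m:ℝ, m = min (c/(1+C)) (1/((2:ℝ)^(2*k+2)*(2*(k:ℝ)+1))) := ⟨_, rfl⟩
  rw [← hm]
  have hm0 : 0 < m := by
    rw [hm]; apply lt_min <;> positivity
  have hterm_nonneg : ∀ i:ℕ, 0 ≤ μ (i+1)/(lam + μ (i+1)) * ((i:ℝ)+1)^(2*k) := by
    intro i
    have h1 := hμpos (i+1) (by omega)
    have h2 : (0:ℝ) < lam + μ (i+1) := by linarith
    positivity
  have hae : (0:ℝ) ≤ a ^ e := Real.rpow_nonneg (le_of_lt ha0) _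
  rcases le_or_gt a lam with hcase | hcase
  · -- big lambda case
    have hμ1c : c ≤ μ 1 := by
      have h := hlow 1 le_rfl
      simpa using h
    have hμ1C : μ 1 ≤ C := by
      have h := hupp 1 le_rfl
      simpa using h
    have hpos1 : (0:ℝ) < lam + μ 1 := by linarith [hμpos 1 le_rfl]
    have hg1 : c/(1+C) ≤ μ 1 / (lam + μ 1) := by
      calc c/(1+C) ≤ μ 1/(1+C) := by gcongr
        _ ≤ μ 1 / (lam + μ 1) := by
            apply div_le_div_of_nonneg_left (le_of_lt (hμpos 1 le_rfl)) hpos1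
            linarith
    have hle_tsum : μ 1 / (lam + μ 1)
        ≤ ∑' i : ℕ, μ (i+1)/(lam + μ (i+1)) * ((i:ℝ)+1)^(2*k) := by
      have h0 := Summable.le_tsum hsum 0 (fun i _ => hterm_nonneg i)
      simpa using h0
    have hlam_e : lam ^ (-e) ≤ a ^ (-e) :=
      Real.rpow_le_rpow_of_nonpos ha0 hcase (by linarith)
    have haa : a ^ e * a ^ (-e) = 1 := by
      rw [← Real.rpow_add ha0]; simp
    have hlamnn : (0:ℝ) ≤ lam ^ (-e) := Real.rpow_nonneg (le_of_lt hlam0) _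
    calc m * a ^ e * lam ^ (-e)
        ≤ (c/(1+C)) * a ^ e * a ^ (-e) := by
          apply mul_le_mul _ hlam_e hlamnn
          · positivity
          · apply mul_le_mul_of_nonneg_right _ hae
            rw [hm]; exact min_le_left _ _
      _ = c/(1+C) := by rw [mul_assoc, haa, mul_one]
      _ ≤ μ 1 / (lam + μ 1) := hg1
      _ ≤ _ := hle_tsum
  · -- small lambda case
    obtain ⟨y, hy⟩ : ∃ y:ℝ, y = (a/lam) ^ (1/(2*α)) := ⟨_, rfl⟩
    have hal1 : 1 < a/lam := by rw [lt_div_iff₀ hlam0]; linarith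
    have hal0 : 0 < a/lam := by positivity
    have hy1 : 1 < y := by
      rw [hy]
      exact Real.one_lt_rpow_iff_of_pos hal0 |>.mpr (Or.inl ⟨hal1, by positivity⟩)
    have hy0 : 0 < y := lt_trans one_pos hy1
    obtain ⟨M, hM⟩ : ∃ M:ℕ, M = ⌊y⌋₊ := ⟨_, rfl⟩
    have hM1 : 1 ≤ M := by
      rw [hM]; exact Nat.le_floor (by exact_mod_cast le_of_lt hy1)
    have hMy : (M:ℝ) ≤ y := by rw [hM]; exact Nat.floor_le (le_of_lt hy0)
    have hy2M : y/2 ≤ (M:ℝ) := by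
      rcases le_or_gt 2 y with h2 | h2
      · have h3 := Nat.sub_one_lt_floor y
        rw [hM]; push_cast; linarith
      · have h3 : (1:ℝ) ≤ (M:ℝ) := by exact_mod_cast hM1
        linarith
    have hypow : y ^ (2*α) = a/lam := by
      rw [hy, ← Real.rpow_mul (le_of_lt hal0)]
      rw [show 1/(2*α) * (2*α) = 1 by field_simp]
      exact Real.rpow_one _
    have ghalf : ∀ i ∈ Finset.range M, (1:ℝ)/2 ≤ μ (i+1)/(lam + μ (i+1)) := by
      intro i hi
      have hj1 : 1 ≤ i+1 := by omega
      have hjM : ((i+1:ℕ):ℝ) ≤ (M:ℝ) := by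
        exact_mod_cast Nat.succ_le_of_lt (Finset.mem_range.mp hi)
      have hjy : ((i+1:ℕ):ℝ) ≤ y := le_trans hjM hMy
      have hj0 : (0:ℝ) < ((i+1:ℕ):ℝ) := by positivity
      have ht0 : 0 < ((i+1:ℕ):ℝ) ^ (2*α) := Real.rpow_pos_of_pos hj0 _
      have hjp : ((i+1:ℕ):ℝ) ^ (2*α) ≤ a/lam := by
        calc ((i+1:ℕ):ℝ) ^ (2*α) ≤ y ^ (2*α) :=
              Real.rpow_le_rpow (le_of_lt hj0) hjy (by positivity)
          _ = a/lam := hypow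
      have hmulam : lam ≤ μ (i+1) := by
        have hlo := hlow (i+1) hj1
        have h1 : (a/lam)⁻¹ ≤ (((i+1:ℕ):ℝ) ^ (2*α))⁻¹ := by
          exact inv_anti₀ ht0 hjp
        have h2 : lam ≤ c * (a/lam)⁻¹ := by
          rw [inv_div]
          have h3 : a * (lam/a) = lam := by field_simp
          have h4 : a * (lam/a) ≤ c * (lam/a) :=
            mul_le_mul_of_nonneg_right hac (by positivity)
          linarith
        calc lam ≤ c * (a/lam)⁻¹ := h2
          _ ≤ c * (((i+1:ℕ):ℝ) ^ (2*α))⁻¹ := mul_le_mul_of_nonneg_left h1 (le_of_lt hc)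
          _ = c * ((i+1:ℕ):ℝ) ^ (-(2*α)) := by
              rw [Real.rpow_neg (le_of_lt hj0)]
          _ ≤ μ (i+1) := hlo
      have hμp := hμpos (i+1) hj1
      rw [div_le_div_iff₀ (by norm_num) (by linarith)]
      linarith
    have hsumlow : (1:ℝ)/2 * ((M:ℝ)^(2*k+1)/(2*(k:ℝ)+1))
        ≤ ∑ i ∈ Finset.range M, μ (i+1)/(lam+μ (i+1)) * ((i:ℝ)+1)^(2*k) := by
      have h1 : ∑ i ∈ Finset.range M, (1:ℝ)/2 * ((i:ℝ)+1)^(2*k)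
          ≤ ∑ i ∈ Finset.range M, μ (i+1)/(lam+μ (i+1)) * ((i:ℝ)+1)^(2*k) :=
        Finset.sum_le_sum (fun i hi =>
          mul_le_mul_of_nonneg_right (ghalf i hi) (by positivity))
      have h2 := aux_sum_pow_lower k M
      rw [← Finset.mul_sum] at h1
      have h3 : (1:ℝ)/2 * ((M:ℝ)^(2*k+1)/(2*(k:ℝ)+1))
          ≤ (1:ℝ)/2 * ∑ i ∈ Finset.range M, ((i:ℝ)+1)^(2*k) := by
        apply mul_le_mul_of_nonneg_left _ (by norm_num)
        exact_mod_cast h2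
      linarith
    have hsum_le := Summable.sum_le_tsum (Finset.range M) (fun i _ => hterm_nonneg i) hsum
    have hM_pow : (y/2)^(2*k+1) ≤ (M:ℝ)^(2*k+1) :=
      pow_le_pow_left₀ (by positivity) hy2M _
    have hy_pow : y^(2*k+1) = (a/lam)^e := by
      rw [← Real.rpow_natCast y (2*k+1), hy, ← Real.rpow_mul (le_of_lt hal0), he]
      congr 1
      push_cast
      field_simp
    have hsplit_e : a ^ e * lam ^ (-e) = (a/lam)^e := by
      rw [Real.div_rpow (le_of_lt ha0) (le_of_lt hlam0), Real.rpow_neg (le_of_lt hlam0)]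
      ring
    calc m * a ^ e * lam ^ (-e)
        ≤ (1/((2:ℝ)^(2*k+2)*(2*(k:ℝ)+1))) * (a ^ e * lam ^ (-e)) := by
          rw [mul_assoc]
          apply mul_le_mul_of_nonneg_right _ (by positivity)
          rw [hm]; exact min_le_right _ _
      _ = (1/((2:ℝ)^(2*k+2)*(2*(k:ℝ)+1))) * (a/lam)^e := by rw [hsplit_e]
      _ = (1:ℝ)/2 * ((y/2)^(2*k+1)/(2*(k:ℝ)+1)) := by
          rw [div_pow, ← hy_pow]
          have h2 : ((2:ℝ))^(2*k+1) ≠ 0 := by positivity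
          field_simp
          ring
      _ ≤ (1:ℝ)/2 * ((M:ℝ)^(2*k+1)/(2*(k:ℝ)+1)) := by
          apply mul_le_mul_of_nonneg_left _ (by norm_num)
          exact (div_le_div_iff_of_pos_right (by positivity)).mpr hM_pow
      _ ≤ ∑ i ∈ Finset.range M, μ (i+1)/(lam+μ (i+1)) * ((i:ℝ)+1)^(2*k) := hsumlow
      _ ≤ _ := hsum_le

/-- Sequence-space form of Lemma 3: `‖f^{(k)}‖₂² ≲ (κ̃²_k/κ̃²_0) ‖f‖²_{H̃}` for
kernels with polynomially decaying eigenvalues `μ_i ≍ i^{-2α}`. -/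
theorem stmt19 (c C α : ℝ) (k : ℕ) (hc : 0 < c) (hC : 0 < C)
    (hα : (k : ℝ) + 1 / 2 < α) :
    ∃ C' > 0, ∀ (μ : ℕ → ℝ) (lam : ℝ),
      (∀ i : ℕ, 1 ≤ i → 0 < μ i) →
      (∀ i : ℕ, 1 ≤ i → c * (i : ℝ) ^ (-(2 * α)) ≤ μ i) →
      (∀ i : ℕ, 1 ≤ i → μ i ≤ C * (i : ℝ) ^ (-(2 * α))) →
      0 < lam → lam ≤ 1 →
      ∀ f : ℕ → ℝ, Summable (fun i : ℕ => (f i) ^ 2) →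
        Summable (fun i : ℕ => (f (i + 1)) ^ 2 * (lam + μ (i + 1)) / μ (i + 1)) →
        Summable (fun i : ℕ => (f (i + 1)) ^ 2 * ((i : ℝ) + 1) ^ (2 * k)) ∧
        (∑' i : ℕ, (f (i + 1)) ^ 2 * ((i : ℝ) + 1) ^ (2 * k)) ≤
          C' * ((∑' i : ℕ, μ (i + 1) / (lam + μ (i + 1)) * ((i : ℝ) + 1) ^ (2 * k)) /
                (∑' i : ℕ, μ (i + 1) / (lam + μ (i + 1)))) *
            ∑' i : ℕ, (f (i + 1)) ^ 2 * (lam + μ (i + 1)) / μ (i + 1) := by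
  have hk0 : (0:ℝ) ≤ (k:ℝ) := Nat.cast_nonneg k
  have hα0 : 0 < α := by linarith
  have hα2 : 1 < 2*α := by linarith
  have hkα : (k:ℝ) ≤ α := by linarith
  obtain ⟨A, hA⟩ : ∃ A:ℝ, A = max C 1 := ⟨_, rfl⟩
  have hA1 : (1:ℝ) ≤ A := hA ▸ le_max_right _ _
  have hA0 : (0:ℝ) < A := by linarith
  obtain ⟨B0, hB0⟩ : ∃ B0:ℝ, B0 = (2 + 1/(2*α-1)) * A ^ (1/(2*α)) := ⟨_, rfl⟩
  have hB0pos : 0 < B0 := by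
    rw [hB0]
    have h1 : 0 < A ^ (1/(2*α)) := Real.rpow_pos_of_pos hA0 _
    have h2 : 0 < 1/(2*α-1) := div_pos one_pos (by linarith)
    nlinarith
  obtain ⟨c1, hc1⟩ : ∃ c1:ℝ,
      c1 = (min (c/(1+C)) (1/((2:ℝ)^(2*k+2)*(2*(k:ℝ)+1)))) * (min c 1) ^ ((2*(k:ℝ)+1)/(2*α)) :=
    ⟨_, rfl⟩
  have hc1pos : 0 < c1 := by
    rw [hc1]
    apply mul_pos
    · apply lt_min <;> positivity
    · exact Real.rpow_pos_of_pos (lt_min hc one_pos) _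
  have hAk : 0 < A ^ ((k:ℝ)/α) := Real.rpow_pos_of_pos hA0 _
  refine ⟨A ^ ((k:ℝ)/α) * B0 / c1, by positivity, ?_⟩
  intro μ lam hμpos hlow hupp hlam0 hlam1 f hf hfH
  have hμp : ∀ i : ℕ, 0 < μ (i+1) := fun i => hμpos (i+1) (by omega)
  have hlp : ∀ i : ℕ, 0 < lam + μ (i+1) := fun i => by linarith [hμp i]
  -- the pointwise constant
  obtain ⟨K, hK⟩ : ∃ K:ℝ, K = A ^ ((k:ℝ)/α) * lam ^ (-((k:ℝ)/α)) := ⟨_, rfl⟩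
  have hKpos : 0 < K := by
    rw [hK]; exact mul_pos hAk (Real.rpow_pos_of_pos hlam0 _)
  -- upper bound on g
  have hgu : ∀ i : ℕ, 1 ≤ i → μ i / (lam + μ i) ≤ A * (i:ℝ) ^ (-(2*α)) / lam := by
    intro i hi
    have h1 : μ i / (lam + μ i) ≤ μ i / lam := by
      apply div_le_div_of_nonneg_left (le_of_lt (hμpos i hi)) hlam0
      linarith [hμpos i hi]
    have h2 : μ i / lam ≤ C * (i:ℝ) ^ (-(2*α)) / lam := by
      gcongr
      exact hupp i hi
    have h3 : C * (i:ℝ) ^ (-(2*α)) / lam ≤ A * (i:ℝ) ^ (-(2*α)) / lam := by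
      have hnn : (0:ℝ) ≤ (i:ℝ) ^ (-(2*α)) := Real.rpow_nonneg (Nat.cast_nonneg i) _
      have hCA : C ≤ A := hA ▸ le_max_left _ _
      gcongr
    exact le_trans h1 (le_trans h2 h3)
  -- pointwise bound
  have hpt : ∀ i : ℕ, ((i:ℝ)+1) ^ (2*k) * (μ (i+1) / (lam + μ (i+1))) ≤ K := by
    intro i
    have hi1 : 1 ≤ i+1 := by omega
    have hg0 : 0 ≤ μ (i+1) / (lam + μ (i+1)) := aux_g_nonneg (hμp i) hlam0
    have hg1 : μ (i+1) / (lam + μ (i+1)) ≤ 1 := aux_g_le_one (hμp i) hlam0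
    have haux := aux_pointwise (m := (k:ℝ)) hα0 hlam0 hA1 hi1 hk0 hkα hg0 hg1
      (hgu (i+1) hi1)
    have hcast : ((i+1:ℕ):ℝ) ^ (2*(k:ℝ)) = ((i:ℝ)+1) ^ (2*k) := by
      rw [show (2*(k:ℝ)) = ((2*k : ℕ):ℝ) by push_cast; ring, Real.rpow_natCast]
      push_cast
      ring
    rw [hcast] at haux
    calc ((i:ℝ)+1) ^ (2*k) * (μ (i+1) / (lam + μ (i+1))) ≤ (A/lam) ^ ((k:ℝ)/α) := haux
      _ = K := by
          rw [hK, Real.div_rpow (le_of_lt hA0) (le_of_lt hlam0),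
            Real.rpow_neg (le_of_lt hlam0)]
          ring
  -- termwise inequality
  have hterm : ∀ i : ℕ, f (i+1) ^ 2 * ((i:ℝ)+1) ^ (2*k)
      ≤ (f (i+1) ^ 2 * (lam + μ (i+1)) / μ (i+1)) * K := by
    intro i
    have h0 : 0 ≤ f (i+1) ^ 2 * ((lam + μ (i+1)) / μ (i+1)) := by
      have := hμp i; have := hlp i; positivity
    have hmul := mul_le_mul_of_nonneg_left (hpt i) h0
    have hμne : μ (i+1) ≠ 0 := ne_of_gt (hμp i)
    have hlne : lam + μ (i+1) ≠ 0 := ne_of_gt (hlp i)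
    calc f (i+1) ^ 2 * ((i:ℝ)+1) ^ (2*k)
        = (f (i+1) ^ 2 * ((lam + μ (i+1)) / μ (i+1)))
            * (((i:ℝ)+1) ^ (2*k) * (μ (i+1) / (lam + μ (i+1)))) := by
          field_simp
      _ ≤ (f (i+1) ^ 2 * ((lam + μ (i+1)) / μ (i+1))) * K := hmul
      _ = (f (i+1) ^ 2 * (lam + μ (i+1)) / μ (i+1)) * K := by ring
  have hmaj : Summable (fun i : ℕ => (f (i+1) ^ 2 * (lam + μ (i+1)) / μ (i+1)) * K) :=
    hfH.mul_right K
  have hsumL : Summable (fun i : ℕ => f (i+1) ^ 2 * ((i:ℝ)+1) ^ (2*k)) :=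
    Summable.of_nonneg_of_le (fun i => by positivity) hterm hmaj
  -- summability of the kappa_k series
  have hSksum : Summable (fun i : ℕ => μ (i+1) / (lam + μ (i+1)) * ((i:ℝ)+1) ^ (2*k)) := by
    have hmaj2 : Summable (fun i : ℕ => (A/lam) * ((i:ℝ)+1) ^ (2*(k:ℝ)-2*α)) :=
      (aux_summable_shift (by linarith)).mul_left _
    apply Summable.of_nonneg_of_le (fun i => by
      have := hμp i; have := hlp i; positivity) (fun i => ?_) hmaj2
    have h1 := hgu (i+1) (by omega)
    have h2 : ((i+1:ℕ):ℝ) ^ (-(2*α)) = ((i:ℝ)+1) ^ (-(2*α)) := by push_cast; ring_nf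
    rw [h2] at h1
    have h3 : 0 ≤ ((i:ℝ)+1) ^ (2*k) := by positivity
    calc μ (i+1) / (lam + μ (i+1)) * ((i:ℝ)+1) ^ (2*k)
        ≤ (A * ((i:ℝ)+1) ^ (-(2*α)) / lam) * ((i:ℝ)+1) ^ (2*k) :=
          mul_le_mul_of_nonneg_right h1 h3
      _ = (A/lam) * (((i:ℝ)+1) ^ (-(2*α)) * ((i:ℝ)+1) ^ (2*k)) := by ring
      _ = (A/lam) * ((i:ℝ)+1) ^ (2*(k:ℝ)-2*α) := by
          congr 1
          rw [← Real.rpow_natCast ((i:ℝ)+1) (2*k), ← Real.rpow_add (by positivity)]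
          congr 1
          push_cast
          ring
  -- lower bound on S0 tsum positivity
  have hS0 := aux_S0_up hC hα2 hμpos hupp hlam0 hlam1
  rw [← hA] at hS0
  have hS0sum := hS0.1
  have hS0pos : 0 < ∑' i : ℕ, μ (i+1) / (lam + μ (i+1)) := by
    have h1 : 0 < μ 1 / (lam + μ 1) := div_pos (hμp 0) (hlp 0)
    have h2 := Summable.le_tsum hS0sum 0 (fun i _ => le_of_lt (div_pos (hμp i) (hlp i)))
    exact lt_of_lt_of_le h1 h2
  have hS0le : ∑' i : ℕ, μ (i+1) / (lam + μ (i+1)) ≤ B0 * lam ^ (-(1/(2*α))) := by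
    rw [hB0]
    exact hS0.2
  have hSk := aux_Sk_low k hc hC hα0 hμpos hlow hupp hlam0 hlam1 hSksum
  rw [← hc1] at hSk
  -- key: K * S0 ≤ C' * Sk
  have hlamprod : lam ^ (-((k:ℝ)/α)) * lam ^ (-(1/(2*α))) = lam ^ (-((2*(k:ℝ)+1)/(2*α))) := by
    rw [← Real.rpow_add hlam0]
    congr 1
    field_simp
    ring
  have hkey : K * (∑' i : ℕ, μ (i+1) / (lam + μ (i+1)))
      ≤ (A ^ ((k:ℝ)/α) * B0 / c1)
        * ∑' i : ℕ, μ (i+1) / (lam + μ (i+1)) * ((i:ℝ)+1) ^ (2*k) := by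
    calc K * (∑' i : ℕ, μ (i+1) / (lam + μ (i+1)))
        ≤ K * (B0 * lam ^ (-(1/(2*α)))) :=
          mul_le_mul_of_nonneg_left hS0le (le_of_lt hKpos)
      _ = A ^ ((k:ℝ)/α) * B0 * lam ^ (-((2*(k:ℝ)+1)/(2*α))) := by
          rw [hK, ← hlamprod]; ring
      _ = (A ^ ((k:ℝ)/α) * B0 / c1) * (c1 * lam ^ (-((2*(k:ℝ)+1)/(2*α)))) := by
          field_simp
      _ ≤ (A ^ ((k:ℝ)/α) * B0 / c1)
            * ∑' i : ℕ, μ (i+1) / (lam + μ (i+1)) * ((i:ℝ)+1) ^ (2*k) := by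
          apply mul_le_mul_of_nonneg_left hSk
          positivity
  have hKle : K ≤ (A ^ ((k:ℝ)/α) * B0 / c1)
      * ((∑' i : ℕ, μ (i+1) / (lam + μ (i+1)) * ((i:ℝ)+1) ^ (2*k))
          / (∑' i : ℕ, μ (i+1) / (lam + μ (i+1)))) := by
    rw [mul_div_assoc']
    rw [le_div_iff₀ hS0pos]
    exact hkey
  refine ⟨hsumL, ?_⟩
  have h1 : ∑' i : ℕ, f (i+1) ^ 2 * ((i:ℝ)+1) ^ (2*k)
      ≤ ∑' i : ℕ, (f (i+1) ^ 2 * (lam + μ (i+1)) / μ (i+1)) * K :=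
    Summable.tsum_le_tsum hterm hsumL hmaj
  have h2 : ∑' i : ℕ, (f (i+1) ^ 2 * (lam + μ (i+1)) / μ (i+1)) * K
      = (∑' i : ℕ, f (i+1) ^ 2 * (lam + μ (i+1)) / μ (i+1)) * K := tsum_mul_right
  have hSH0 : 0 ≤ ∑' i : ℕ, f (i+1) ^ 2 * (lam + μ (i+1)) / μ (i+1) := by
    apply tsum_nonneg
    intro i
    have := hμp i; have := hlp i
    positivity
  calc ∑' i : ℕ, f (i+1) ^ 2 * ((i:ℝ)+1) ^ (2*k)
      ≤ (∑' i : ℕ, f (i+1) ^ 2 * (lam + μ (i+1)) / μ (i+1)) * K := by rw [← h2]; exact h1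
    _ ≤ (∑' i : ℕ, f (i+1) ^ 2 * (lam + μ (i+1)) / μ (i+1))
          * ((A ^ ((k:ℝ)/α) * B0 / c1)
            * ((∑' i : ℕ, μ (i+1) / (lam + μ (i+1)) * ((i:ℝ)+1) ^ (2*k))
              / (∑' i : ℕ, μ (i+1) / (lam + μ (i+1))))) :=
        mul_le_mul_of_nonneg_left hKle hSH0
    _ = (A ^ ((k:ℝ)/α) * B0 / c1)
          * ((∑' i : ℕ, μ (i+1) / (lam + μ (i+1)) * ((i:ℝ)+1) ^ (2*k))
            / (∑' i : ℕ, μ (i+1) / (lam + μ (i+1))))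
          * ∑' i : ℕ, f (i+1) ^ 2 * (lam + μ (i+1)) / μ (i+1) := by ring
end
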